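/- Assume W is finite. For every subset I ⊆ B, the subspace P_I is stable under the Hecke group algebra: for every f ∈ H(W) one has f(P_I) ⊆ P_I; in other words, each P_I is a module over H(W). -/

import Mathlib

open scoped Classical

noncomputable section

namespace HGA

variable {B : Type*} {W : Type*} [Group W] {M : CoxeterMatrix B}

/-- `σ_i` : the linear extension to `ℂ[W]` of right multiplication by the simple
reflection `s_i`. -/
def sigmaOp (cs : CoxeterSystem M W) (i : B) : Module.End ℂ (MonoidAlgebra ℂ W) :=
  (Finsupp.lift (MonoidAlgebra ℂ W) ℂ W fun w =>
    MonoidAlgebra.single (w * cs.simple i) (1 : ℂ))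
    ∘ₗ (MonoidAlgebra.coeffLinearEquiv ℂ).toLinearMap

/-- `π_i` : the antisorting (0-Hecke) operator: on a basis element `w` it gives `w * s_i`
if `i` is not a right descent of `w`, and `w` otherwise. -/
def piOp (cs : CoxeterSystem M W) (i : B) : Module.End ℂ (MonoidAlgebra ℂ W) :=
  (Finsupp.lift (MonoidAlgebra ℂ W) ℂ W fun w =>
    if cs.IsRightDescent w i then MonoidAlgebra.single w (1 : ℂ)
    else MonoidAlgebra.single (w * cs.simple i) (1 : ℂ))
    ∘ₗ (MonoidAlgebra.coeffLinearEquiv ℂ).toLinearMap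

/-- `π̄_i` : the sorting operator: on a basis element `w` it gives `w * s_i`
if `i` is a right descent of `w`, and `w` otherwise. -/
def piBarOp (cs : CoxeterSystem M W) (i : B) : Module.End ℂ (MonoidAlgebra ℂ W) :=
  (Finsupp.lift (MonoidAlgebra ℂ W) ℂ W fun w =>
    if cs.IsRightDescent w i then MonoidAlgebra.single (w * cs.simple i) (1 : ℂ)
    else MonoidAlgebra.single w (1 : ℂ))
    ∘ₗ (MonoidAlgebra.coeffLinearEquiv ℂ).toLinearMap

/-- The Hecke group algebra `H(W)` : the unital ℂ-subalgebra of `End_ℂ(ℂ[W])`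
generated by the `σ_i` and the `π_i`. -/
def heckeGroupAlgebra (cs : CoxeterSystem M W) :
    Subalgebra ℂ (Module.End ℂ (MonoidAlgebra ℂ W)) :=
  Algebra.adjoin ℂ (Set.range (sigmaOp cs) ∪ Set.range (piOp cs))

/-- `P_I` : the subspace of vectors of `ℂ[W]` that are antisymmetric on the left
for every `i ∈ I`, i.e. `s_i · v = −v` (left multiplication in `ℂ[W]`) for all `i ∈ I`. -/
def PSub (cs : CoxeterSystem M W) (I : Set B) : Submodule ℂ (MonoidAlgebra ℂ W) where
  carrier := {v | ∀ i ∈ I, MonoidAlgebra.single (cs.simple i) (1 : ℂ) * v = -v}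
  add_mem' := by
    intro a b ha hb i hi
    rw [mul_add, ha i hi, hb i hi, neg_add]
  zero_mem' := by
    intro i hi
    simp
  smul_mem' := by
    intro c v hv i hi
    rw [Algebra.mul_smul_comm, hv i hi, smul_neg]

section Aux

open CoxeterSystem List

variable (cs : CoxeterSystem M W)

local prefix:100 "s" => cs.simple
local prefix:100 "π" => cs.wordProd
local prefix:100 "ℓ" => cs.length
local prefix:100 "ris" => cs.rightInvSeq

/-- The sign-parity operator on `W × ℤˣ` associated to a simple reflection. -/
noncomputable def eFun (i : B) : Function.End (W × ℤˣ) := fun x =>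
  (s i * x.1 * s i, if x.1 = s i then -x.2 else x.2)

/-- Product of the `eFun`s along a word. -/
noncomputable def phi (ω : List B) : Function.End (W × ℤˣ) := (ω.map (eFun cs)).prod

@[simp] lemma phi_nil : phi cs [] = 1 := rfl

lemma phi_cons (i : B) (ω : List B) : phi cs (i :: ω) = eFun cs i * phi cs ω := by
  simp [phi]

lemma ris_cons (i : B) (ω : List B) :
    ris (i :: ω) = ((π ω)⁻¹ * s i * π ω) :: ris ω := rfl

lemma phi_apply (ω : List B) (t : W) (ε : ℤˣ) :
    phi cs ω (t, ε) = (π ω * t * (π ω)⁻¹,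
      if Odd ((ris ω).count t) then -ε else ε) := by
  induction ω with
  | nil => simp [rightInvSeq]; rfl
  | cons i ω ih =>
    rw [phi_cons]
    show eFun cs i (phi cs ω (t, ε)) = _
    rw [ih]
    have hcond : (π ω * t * (π ω)⁻¹ = s i) ↔ (π ω)⁻¹ * s i * π ω = t := by
      constructor
      · intro h; rw [← h]; group
      · intro h; rw [← h]; group
    rw [ris_cons, count_cons]
    unfold eFun
    refine Prod.ext ?_ ?_
    · show s i * (π ω * t * (π ω)⁻¹) * s i = _
      simp only [wordProd_cons, mul_inv_rev, inv_simple]; group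
    · show (if π ω * t * (π ω)⁻¹ = s i then -(if Odd ((ris ω).count t) then -ε else ε)
          else (if Odd ((ris ω).count t) then -ε else ε))
        = (if Odd (((ris ω).count t) +
            if (((π ω)⁻¹ * s i * π ω) == t) = true then 1 else 0) then -ε else ε)
      by_cases h : (π ω)⁻¹ * s i * π ω = t
      · have hb : (((π ω)⁻¹ * s i * π ω) == t) = true := beq_iff_eq.mpr h
        rw [if_pos (hcond.mpr h), hb, if_pos rfl]
        rcases Nat.even_or_odd ((ris ω).count t) with hc | hc <;>
          simp [Nat.odd_add_one, Nat.not_odd_iff_even, hc]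
      · have hb : (((π ω)⁻¹ * s i * π ω) == t) = false :=
          beq_eq_false_iff_ne.mpr h
        rw [if_neg (fun hc => h (hcond.mp hc)), hb]
        simp


lemma simple_mul_pow (i j : B) : ∀ d : ℕ,
    s j * (s i * s j) ^ d = ((s i * s j)⁻¹) ^ d * s j
  | 0 => by simp
  | (d+1) => by
    rw [pow_succ', ← mul_assoc, show s j * (s i * s j) = (s i * s j)⁻¹ * s j by
      simp [mul_inv_rev, mul_assoc], mul_assoc, simple_mul_pow i j d, pow_succ',
      mul_assoc]

lemma aux_qp {G : Type*} [Group G] {p q : G} (hqp : q * p = p⁻¹ * q) :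
    ∀ d : ℕ, q * p ^ d = (p⁻¹) ^ d * q
  | 0 => by simp
  | (d+1) => by
    rw [pow_succ', ← mul_assoc, hqp, mul_assoc, aux_qp hqp d, pow_succ', mul_assoc]

lemma aux_even {G : Type*} [Group G] {p q : G} (hqp : q * p = p⁻¹ * q) (d : ℕ) :
    (p ^ d)⁻¹ * q * p ^ d = q * p ^ (2 * d) := by
  calc (p ^ d)⁻¹ * q * p ^ d = (p⁻¹) ^ d * (q * p ^ d) := by rw [inv_pow, mul_assoc]
    _ = (p⁻¹) ^ d * ((p⁻¹) ^ d * q) := by rw [aux_qp hqp]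
    _ = (p⁻¹) ^ (d + d) * q := by rw [← mul_assoc, ← pow_add]
    _ = q * p ^ (d + d) := (aux_qp hqp _).symm
    _ = q * p ^ (2 * d) := by rw [two_mul]

lemma aux_odd {G : Type*} [Group G] {p q : G} (hq : q * q = 1) (hqp : q * p = p⁻¹ * q)
    (d : ℕ) : (q * p ^ d)⁻¹ * (p * q) * (q * p ^ d) = q * p ^ (2 * d + 1) := by
  have hqinv : q⁻¹ = q := by
    rw [← mul_one q⁻¹, ← hq, ← mul_assoc, inv_mul_cancel, one_mul]
  calc (q * p ^ d)⁻¹ * (p * q) * (q * p ^ d)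
      = (p ^ d)⁻¹ * (q * p) * (q * q) * p ^ d := by
        rw [mul_inv_rev, hqinv]; group
    _ = (p ^ d)⁻¹ * (q * p) * p ^ d := by rw [hq, mul_one]
    _ = (p⁻¹) ^ d * (q * p ^ (d + 1)) := by
        rw [inv_pow, mul_assoc, mul_assoc, ← pow_succ']
    _ = (p⁻¹) ^ d * ((p⁻¹) ^ (d + 1) * q) := by rw [aux_qp hqp]
    _ = (p⁻¹) ^ (d + (d + 1)) * q := by rw [← mul_assoc, ← pow_add]
    _ = q * p ^ (d + (d + 1)) := (aux_qp hqp _).symm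
    _ = q * p ^ (2 * d + 1) := by ring_nf

lemma conj_aw (i j : B) (c : ℕ) :
    (π (alternatingWord i j c))⁻¹ * (if Even c then s j else s i) * π (alternatingWord i j c)
      = s j * (s i * s j) ^ c := by
  have hqp : s j * (s i * s j) = (s i * s j)⁻¹ * s j := by
    rw [mul_inv_rev, inv_simple, inv_simple, ← mul_assoc]
  rcases Nat.even_or_odd c with hc | hc
  · obtain ⟨d, rfl⟩ := hc
    have h2d : d + d = 2 * d := (two_mul d).symm
    rw [h2d] at *
    rw [if_pos (even_two_mul d), cs.prod_alternatingWord_eq_mul_pow,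
      if_pos (even_two_mul d), Nat.mul_div_cancel_left d (by norm_num), one_mul]
    exact aux_even hqp d
  · obtain ⟨d, rfl⟩ := hc
    rw [if_neg (by simp [parity_simps]), cs.prod_alternatingWord_eq_mul_pow,
      if_neg (by simp [parity_simps])]
    have hdiv : (2 * d + 1) / 2 = d := by omega
    rw [hdiv]
    have hsi : s i = (s i * s j) * s j := by rw [simple_mul_simple_cancel_right]
    nth_rewrite 2 [hsi]
    exact aux_odd (cs.simple_mul_simple_self j) hqp d

lemma ris_aw (i j : B) : ∀ m : ℕ,
    ris (alternatingWord i j m)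
      = ((List.range m).reverse).map (fun c => s j * (s i * s j) ^ c)
  | 0 => by simp [alternatingWord, rightInvSeq]
  | (m+1) => by
    rw [alternatingWord_succ', ris_cons, ris_aw i j m, List.range_succ]
    have hite : s (if Even m then j else i) = if Even m then s j else s i := by
      split <;> rfl
    have hhead : (π (alternatingWord i j m))⁻¹ * s (if Even m then j else i)
        * π (alternatingWord i j m) = s j * (s i * s j) ^ m := by
      rw [hite]; exact conj_aw cs i j m
    simp [hhead]

lemma even_count_ris_aw (i j : B) (t : W) :
    Even (((ris (alternatingWord i j (2 * M i j))).count t)) := by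
  rw [ris_aw, List.map_reverse, List.count_reverse]
  have h2 : 2 * M i j = M i j + M i j := by ring
  rw [h2, List.range_add, List.map_append, List.count_append, List.map_map]
  have : (List.map ((fun c => s j * (s i * s j) ^ c) ∘ (fun x => M i j + x))
      (List.range (M i j))) = List.map (fun c => s j * (s i * s j) ^ c)
      (List.range (M i j)) := by
    apply List.map_congr_left
    intro a _
    simp only [Function.comp_apply, pow_add, cs.simple_mul_simple_pow i j, one_mul]
  rw [this]
  exact ⟨_, rfl⟩

lemma liftable : CoxeterMatrix.IsLiftable M (eFun cs) := by
  intro i j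
  have key : ∀ m : ℕ, phi cs (alternatingWord i j (2 * m)) = (eFun cs i * eFun cs j) ^ m := by
    intro m
    induction m with
    | zero => simp [alternatingWord]
    | succ m ih =>
      have h1 : 2 * (m + 1) = (2 * m + 1) + 1 := by ring
      rw [h1, alternatingWord_succ', alternatingWord_succ',
        if_neg (by simp [Nat.even_add_one, parity_simps]), if_pos (by exact ⟨m, by ring⟩),
        phi_cons, phi_cons, ih, pow_succ', ← mul_assoc]
  have hπ : π (alternatingWord i j (2 * M i j)) = 1 := by
    rw [cs.prod_alternatingWord_eq_mul_pow, if_pos (by exact ⟨M i j, by ring⟩),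
      Nat.mul_div_cancel_left _ (by norm_num), one_mul, cs.simple_mul_simple_pow i j]
  rw [← key]
  funext x
  obtain ⟨t, ε⟩ := x
  rw [phi_apply, hπ]
  have := even_count_ris_aw cs i j t
  simp [Nat.not_odd_iff_even.mpr this]
  rfl

/-- The parity representation of `W`. -/
noncomputable def rho : W →* Function.End (W × ℤˣ) := cs.lift ⟨eFun cs, liftable cs⟩

lemma rho_wordProd (ω : List B) : rho cs (π ω) = phi cs ω := by
  induction ω with
  | nil => simp [phi]
  | cons i ω ih =>
    rw [wordProd_cons, map_mul, ih, phi_cons, rho, lift_apply_simple]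

lemma parity_count (ω ω' : List B) (t : W) (h : π ω = π ω') :
    (Odd ((ris ω).count t) ↔ Odd ((ris ω').count t)) := by
  have h2 : phi cs ω (t, 1) = phi cs ω' (t, 1) := by
    rw [← rho_wordProd, ← rho_wordProd, h]
  rw [phi_apply, phi_apply] at h2
  have h3 := congrArg Prod.snd h2
  simp only at h3
  by_cases h4 : Odd ((ris ω).count t) <;> by_cases h5 : Odd ((ris ω').count t) <;>
    simp only [h4, h5, if_true, if_false, iff_true, iff_false, not_true, not_false_iff] at h3 ⊢
  · exact absurd h3 (by decide)
  · exact absurd h3.symm (by decide)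

lemma mem_ris {w : W} {j : B} (h : cs.IsRightDescent w j) {ω : List B}
    (hω : π ω = w) : s j ∈ ris ω := by
  obtain ⟨ωu, hred, hu⟩ := cs.exists_reduced_word' (w * s j)
  have hπ : π (ωu.concat j) = w := by
    rw [wordProd_concat, ← hu, simple_mul_simple_cancel_right]
  have hnot : s j ∉ ris ωu := by
    intro hmem
    have h2 := (cs.isRightInversion_of_mem_rightInvSeq hred hmem).2
    rw [← hu, simple_mul_simple_cancel_right] at h2
    exact absurd (h.trans h2) (lt_irrefl _)
  have hcount : ((ris (ωu.concat j)).count (s j)) = 1 := by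
    rw [cs.rightInvSeq_concat, List.concat_eq_append, List.count_append]
    have hinj : Function.Injective (MulAut.conj (s j) : W → W) :=
      (MulAut.conj (s j)).injective
    have hzero : (List.map (MulAut.conj (s j) : W → W) (ris ωu)).count (s j) = 0 := by
      rw [List.count_eq_zero]
      intro hmem
      obtain ⟨a, ha, hfa⟩ := List.mem_map.mp hmem
      have haj : a = s j := by
        apply hinj
        rw [hfa]
        simp
      exact hnot (haj ▸ ha)
    rw [hzero]
    simp
  have hodd := (parity_count cs (ωu.concat j) ω (s j) (by rw [hπ, hω])).mp
    (by rw [hcount]; exact odd_one)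
  by_contra hmem
  rw [List.count_eq_zero.mpr hmem] at hodd
  exact (Nat.not_odd_iff_even.mpr (Even.zero)) hodd

lemma zlemma {w : W} {i j : B} (h1 : cs.IsRightDescent w j)
    (h2 : ¬ cs.IsRightDescent (s i * w) j) : s i * w = w * s j := by
  have hlen1 : ℓ (w * s j) + 1 = ℓ w := cs.isRightDescent_iff.mp h1
  have hlen2 : ℓ (s i * w * s j) = ℓ (s i * w) + 1 := cs.not_isRightDescent_iff.mp h2
  have hld : cs.IsLeftDescent w i := by
    by_contra hnl
    have h3 : ℓ (s i * w) = ℓ w + 1 := cs.not_isLeftDescent_iff.mp hnl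
    have h4 : ℓ (s i * (w * s j)) ≤ ℓ (w * s j) + 1 := by
      rcases cs.length_simple_mul (w * s j) i with h | h <;> omega
    rw [← mul_assoc] at h4
    omega
  have hlen3 : ℓ (s i * w) + 1 = ℓ w := cs.isLeftDescent_iff.mp hld
  have hrd : cs.IsRightDescent w⁻¹ i := cs.isRightDescent_inv_iff.mpr hld
  obtain ⟨ωv, hred, hv⟩ := cs.exists_reduced_word' ((w * s j)⁻¹)
  have hπ : π (j :: ωv) = w⁻¹ := by
    rw [wordProd_cons, ← hv, mul_inv_rev, inv_simple, ← mul_assoc,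
      simple_mul_simple_self, one_mul]
  have hmem := mem_ris cs hrd hπ
  rw [ris_cons, ← hv] at hmem
  rcases List.mem_cons.mp hmem with hc | hc
  · have hsi : s i = w * s j * w⁻¹ := by
      rw [hc, inv_inv, mul_inv_rev]
      group
    rw [hsi]
    group
  · exfalso
    have h5 := (cs.isRightInversion_of_mem_rightInvSeq hred hc).2
    rw [← hv] at h5
    have e1 : ℓ ((w * s j)⁻¹ * s i) = ℓ (s i * (w * s j)) := by
      rw [← cs.length_inv ((w * s j)⁻¹ * s i)]
      congr 1
      rw [mul_inv_rev, inv_inv, inv_simple]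
    have e2 : ℓ ((w * s j)⁻¹) = ℓ (w * s j) := cs.length_inv _
    rw [e1, e2, ← mul_assoc] at h5
    omega


-- ===== algebra part =====

lemma lift_single' (f : W → MonoidAlgebra ℂ W) (w : W) (c : ℂ) :
    ((Finsupp.lift (MonoidAlgebra ℂ W) ℂ W f) ∘ₗ (MonoidAlgebra.coeffLinearEquiv ℂ).toLinearMap)
      (MonoidAlgebra.single w c) = c • f w := by
  show (Finsupp.lift (MonoidAlgebra ℂ W) ℂ W f) (Finsupp.single w c) = c • f w
  rw [Finsupp.lift_apply]
  exact Finsupp.sum_single_index (by simp)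

lemma smul_single' (c : ℂ) (w : W) :
    c • (MonoidAlgebra.single w (1:ℂ)) = MonoidAlgebra.single w c := by
  rw [MonoidAlgebra.smul_single', mul_one]

lemma sigmaOp_single (i : B) (w : W) (c : ℂ) :
    sigmaOp cs i (MonoidAlgebra.single w c)
      = MonoidAlgebra.single (w * s i) c := by
  have h := lift_single' (fun w => MonoidAlgebra.single (w * s i) (1:ℂ)) w c
  rw [smul_single'] at h
  exact h

lemma piOp_single (i : B) (w : W) (c : ℂ) :
    piOp cs i (MonoidAlgebra.single w c)
      = if cs.IsRightDescent w i then MonoidAlgebra.single w c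
        else MonoidAlgebra.single (w * s i) c := by
  have h := lift_single' (fun w => if cs.IsRightDescent w i
    then MonoidAlgebra.single w (1:ℂ)
    else MonoidAlgebra.single (w * s i) (1:ℂ)) w c
  by_cases hd : cs.IsRightDescent w i
  · rw [if_pos hd, smul_single'] at h
    rw [if_pos hd]
    exact h
  · rw [if_neg hd, smul_single'] at h
    rw [if_neg hd]
    exact h

/-- Endomorphisms preserving a submodule form a subalgebra. -/
noncomputable def stab (P : Submodule ℂ (MonoidAlgebra ℂ W)) :
    Subalgebra ℂ (Module.End ℂ (MonoidAlgebra ℂ W)) where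
  carrier := {f | ∀ v ∈ P, f v ∈ P}
  mul_mem' := fun hf hg v hv => hf _ (hg v hv)
  one_mem' := fun v hv => hv
  add_mem' := fun hf hg v hv => P.add_mem (hf v hv) (hg v hv)
  zero_mem' := fun v _ => by simpa using P.zero_mem
  algebraMap_mem' := fun c v hv => by
    rw [Module.algebraMap_end_apply]
    exact P.smul_mem c hv

lemma mem_PSub {I : Set B} {v : MonoidAlgebra ℂ W} :
    v ∈ PSub cs I ↔ ∀ i ∈ I, MonoidAlgebra.single (cs.simple i) (1 : ℂ) * v = -v :=
  Iff.rfl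

lemma sigma_stab (I : Set B) (j : B) : sigmaOp cs j ∈ stab (PSub cs I) := by
  intro v hv
  rw [mem_PSub]
  intro i hi
  have comm : (sigmaOp cs j) ∘ₗ
        (LinearMap.mulLeft ℂ (MonoidAlgebra.single (s i) (1:ℂ)))
      = (LinearMap.mulLeft ℂ (MonoidAlgebra.single (s i) (1:ℂ))) ∘ₗ sigmaOp cs j := by
    apply MonoidAlgebra.lhom_ext'
    intro a
    apply LinearMap.ext
    intro b
    simp only [LinearMap.comp_apply, MonoidAlgebra.lsingle_apply, LinearMap.mulLeft_apply,
      MonoidAlgebra.single_mul_single, one_mul, sigmaOp_single, mul_assoc]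
  have h2 := congrArg (fun g => g v) comm
  simp only [LinearMap.comp_apply, LinearMap.mulLeft_apply] at h2
  rw [← h2, (mem_PSub cs).mp hv i hi, map_neg]

lemma pi_stab (I : Set B) (j : B) : piOp cs j ∈ stab (PSub cs I) := by
  intro v hv
  rw [mem_PSub]
  intro i hi
  have hv' := (mem_PSub cs).mp hv i hi
  set L : Module.End ℂ (MonoidAlgebra ℂ W) :=
    LinearMap.mulLeft ℂ (MonoidAlgebra.single (s i) (1:ℂ)) with hL
  have key : (L + LinearMap.id) ∘ₗ (piOp cs j) ∘ₗ (LinearMap.id - L) = 0 := by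
    apply MonoidAlgebra.lhom_ext'
    intro w
    apply LinearMap.ext
    intro b
    simp only [LinearMap.comp_apply, MonoidAlgebra.lsingle_apply, LinearMap.sub_apply,
      LinearMap.add_apply, LinearMap.id_apply, LinearMap.zero_apply, map_sub, hL,
      LinearMap.mulLeft_apply, MonoidAlgebra.single_mul_single, one_mul, piOp_single]
    by_cases h1 : cs.IsRightDescent w j <;> by_cases h2 : cs.IsRightDescent (s i * w) j
    · rw [if_pos h1, if_pos h2]
      simp only [MonoidAlgebra.single_mul_single, one_mul,
        simple_mul_simple_cancel_left]
      abel
    · have hz := zlemma cs h1 h2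
      rw [if_pos h1, if_neg h2, hz, simple_mul_simple_cancel_right]
      simp only [sub_self, map_zero, mul_zero]
    · have hz := zlemma cs h2 (by rwa [simple_mul_simple_cancel_left])
      rw [simple_mul_simple_cancel_left] at hz
      have hw : w * s j = s i * w := by
        conv_lhs => rw [hz]
        exact cs.simple_mul_simple_cancel_right j
      rw [if_neg h1, if_pos h2, hw]
      simp only [MonoidAlgebra.single_mul_single, one_mul,
        simple_mul_simple_cancel_left]
      abel
    · rw [if_neg h1, if_neg h2]
      simp only [MonoidAlgebra.single_mul_single, one_mul, ← mul_assoc]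
      rw [cs.simple_mul_simple_self, one_mul]
      abel
  have h3 := congrArg (fun g => g v) key
  simp only [LinearMap.comp_apply, LinearMap.sub_apply, LinearMap.add_apply,
    LinearMap.id_apply, LinearMap.zero_apply] at h3
  rw [hL] at h3
  simp only [LinearMap.mulLeft_apply] at h3
  rw [hv', sub_neg_eq_add] at h3
  have h4 : MonoidAlgebra.single (s i) (1:ℂ) * (piOp cs j v) + piOp cs j v = 0 := by
    have h5 : piOp cs j (v + v) = piOp cs j v + piOp cs j v := map_add _ _ _
    rw [h5, mul_add] at h3
    have h6 : (2:ℂ) • (MonoidAlgebra.single (s i) (1:ℂ) * (piOp cs j v) + piOp cs j v)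
        = 0 := by
      rw [two_smul]
      rw [show MonoidAlgebra.single (s i) (1:ℂ) * piOp cs j v + piOp cs j v
          + (MonoidAlgebra.single (s i) (1:ℂ) * piOp cs j v + piOp cs j v)
          = MonoidAlgebra.single (s i) (1:ℂ) * piOp cs j v
            + MonoidAlgebra.single (s i) (1:ℂ) * piOp cs j v
            + (piOp cs j v + piOp cs j v) by abel]
      exact h3
    have := smul_eq_zero.mp h6
    rcases this with h | h
    · norm_num at h
    · exact h
  rw [eq_neg_iff_add_eq_zero]
  exact h4


end Aux

/-- for `W` finite, each `P_I` is stable under the Hecke group algebra. -/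
theorem heckeGroupAlgebra_stabilizes_PSub (cs : CoxeterSystem M W) [Finite W] (I : Set B)
    (f : Module.End ℂ (MonoidAlgebra ℂ W)) (hf : f ∈ heckeGroupAlgebra cs) :
    ∀ v ∈ PSub cs I, f v ∈ PSub cs I := by
  have hgen : (Set.range (sigmaOp cs) ∪ Set.range (piOp cs))
      ⊆ (stab (PSub cs I) : Set (Module.End ℂ (MonoidAlgebra ℂ W))) := by
    rintro g (⟨j, rfl⟩ | ⟨j, rfl⟩)
    · exact sigma_stab cs I j
    · exact pi_stab cs I j
  exact Algebra.adjoin_le hgen hf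

end HGA
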